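/- Let U ∈ ℝ^{d×d} be a circulant matrix generated by u ∈ ℝ^d, so U = F D F^H where F is the unitary d×d DFT matrix and D = Diag(F^H-transform of u appropriately normalized) is diagonal with ‖D‖_F² = d‖u‖₂². Then for any X ∈ ℝ^{n×d} and v ∈ ℝ^n, the constraint ‖v^T X U‖₂ ≤ β for all circulant U with ‖u‖₂ ≤ 1 is equivalent to ‖v^T X F‖_∞ ≤ β/√d. -/

import Mathlib

open Matrix

/-- Reduction of the linear circular convolution dual constraint to the Fourier domain
(Appendix A.6): with `F` the unitary DFT matrix diagonalizing circulant matrices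
`U = F D Fᴴ` (where `‖D‖_F² = d ‖u‖₂²`), the constraint `‖vᵀXU‖₂ ≤ β` over all such
circulants with `‖u‖₂ ≤ 1` is equivalent to `‖vᵀXF‖_∞ ≤ β/√d`. -/
theorem circulant_dft_constraint {n d : ℕ} (hd : 0 < d)
    (F : Matrix (Fin d) (Fin d) ℂ) (hF : F * Fᴴ = 1) (hF' : Fᴴ * F = 1)
    (X : Matrix (Fin n) (Fin d) ℝ) (v : Fin n → ℝ) (β : ℝ) :
    (∀ D : Fin d → ℂ, (∑ j, ‖D j‖ ^ 2) ≤ (d : ℝ) →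
      Real.sqrt (∑ j, ‖(Matrix.vecMul (fun i => (v i : ℂ))
          (X.map (fun t => (t : ℂ)) * F * Matrix.diagonal D * Fᴴ)) j‖ ^ 2) ≤ β) ↔
    (∀ j, ‖(Matrix.vecMul (fun i => (v i : ℂ)) (X.map (fun t => (t : ℂ)) * F)) j‖
      ≤ β / Real.sqrt d) := by
  set w : Fin d → ℂ := Matrix.vecMul (fun i => (v i : ℂ)) (X.map (fun t => (t : ℂ)) * F) with hw
  have hdR : (0:ℝ) < d := Nat.cast_pos.mpr hd
  have hsd : (0:ℝ) < Real.sqrt d := Real.sqrt_pos.mpr hdR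
  -- Fᴴ preserves the ℓ² norm of row vectors
  have key : ∀ y : Fin d → ℂ,
      (∑ j, ‖(Matrix.vecMul y Fᴴ) j‖ ^ 2) = ∑ j, ‖y j‖ ^ 2 := by
    intro y
    have h1 : (Matrix.vecMul y Fᴴ) ⬝ᵥ star (Matrix.vecMul y Fᴴ) = y ⬝ᵥ star y := by
      rw [star_vecMul, dotProduct_mulVec, vecMul_vecMul, conjTranspose_conjTranspose,
        hF', vecMul_one]
    have h2 : ∀ z : Fin d → ℂ, z ⬝ᵥ star z = ((∑ j, ‖z j‖ ^ 2 : ℝ) : ℂ) := by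
      intro z
      simp only [dotProduct, Pi.star_apply, Complex.star_def, Complex.mul_conj,
        Complex.sq_norm]
      push_cast
      rfl
    have := h1
    rw [h2, h2] at this
    exact_mod_cast this
  -- rewrite the big vecMul
  have rw1 : ∀ D : Fin d → ℂ,
      Matrix.vecMul (fun i => (v i : ℂ))
        (X.map (fun t => (t : ℂ)) * F * Matrix.diagonal D * Fᴴ)
      = Matrix.vecMul (fun j => w j * D j) Fᴴ := by
    intro D
    have hdiag : Matrix.vecMul w (Matrix.diagonal D) = fun j => w j * D j :=
      funext fun j => vecMul_diagonal _ _ _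
    rw [← vecMul_vecMul, ← vecMul_vecMul, ← hw, hdiag]
  constructor
  · intro h j
    have hD : (∑ k, ‖(fun k => if k = j then (Real.sqrt d : ℂ) else 0) k‖ ^ 2)
        = (d : ℝ) := by
      rw [Finset.sum_eq_single j]
      · simp [Complex.norm_real, abs_of_nonneg (Real.sqrt_nonneg _),
          Real.sq_sqrt hdR.le]
      · intro k _ hk; simp [hk]
      · simp
    have := h (fun k => if k = j then (Real.sqrt d : ℂ) else 0) (le_of_eq hD)
    rw [rw1, key] at this
    have hsum : (∑ k, ‖w k * (if k = j then (Real.sqrt d : ℂ) else 0)‖ ^ 2)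
        = ‖w j‖ ^ 2 * d := by
      rw [Finset.sum_eq_single j]
      · simp [norm_mul, mul_pow, Complex.norm_real,
          abs_of_nonneg (Real.sqrt_nonneg _), Real.sq_sqrt hdR.le]
      · intro k _ hk; simp [hk]
      · simp
    rw [hsum, Real.sqrt_mul (by positivity), Real.sqrt_sq (norm_nonneg _)] at this
    exact (le_div_iff₀ hsd).mpr this
  · intro h D hDle
    have hβ : 0 ≤ β := by
      have := h ⟨0, hd⟩
      have h0 : (0:ℝ) ≤ β / Real.sqrt d := le_trans (norm_nonneg _) this
      have := (le_div_iff₀ hsd).mp h0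
      simpa using this
    rw [rw1, key]
    have hbound : (∑ j, ‖w j * D j‖ ^ 2) ≤ β ^ 2 := by
      calc (∑ j, ‖w j * D j‖ ^ 2)
          ≤ ∑ j, (β / Real.sqrt d) ^ 2 * ‖D j‖ ^ 2 := by
            apply Finset.sum_le_sum
            intro j _
            rw [norm_mul, mul_pow]
            exact mul_le_mul_of_nonneg_right
              (pow_le_pow_left₀ (norm_nonneg _) (h j) 2) (by positivity)
        _ = (β ^ 2 / d) * ∑ j, ‖D j‖ ^ 2 := by
            rw [← Finset.mul_sum, div_pow, Real.sq_sqrt hdR.le]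
        _ ≤ (β ^ 2 / d) * d := by gcongr
        _ = β ^ 2 := by field_simp
    calc Real.sqrt (∑ j, ‖w j * D j‖ ^ 2)
        ≤ Real.sqrt (β ^ 2) := Real.sqrt_le_sqrt hbound
      _ = β := Real.sqrt_sq hβ
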